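/- Define sequences by d_0^- = d_0^+ = 1, d_n^- = 2 d_{n-1}^- d_{n-1}^+, d_n^+ = (d_{n-1}^-)² if n is odd and (d_{n-1}^-)² + (d_{n-1}^+)² if n is even, and d_n = d_n^- + d_n^+ if n is odd, d_n^- if n is even. Then d_1 = 3, d_2 = 4, d_3 = 56, and (log₂ d_n)/2^n converges to a finite positive limit as n → ∞ (extensive ground-state degeneracy). -/

import Mathlib

/-- Degeneracies (d_n^-, d_n^+) of the lowest odd/even parity states of the uniform
anti-ferromagnetic hierarchical parity model. -/
def dpair : ℕ → ℕ × ℕ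
  | 0 => (1, 1)
  | (n+1) =>
      (2 * (dpair n).1 * (dpair n).2,
       if (n+1) % 2 = 1 then (dpair n).1 ^ 2 else (dpair n).1 ^ 2 + (dpair n).2 ^ 2)

/-- Ground state degeneracy d_n. -/
def dseq (n : ℕ) : ℕ := if n % 2 = 1 then (dpair n).1 + (dpair n).2 else (dpair n).1

namespace DegAux

open Real Filter Finset

lemma dpair_succ (n : ℕ) : dpair (n+1) =
    (2 * (dpair n).1 * (dpair n).2,
     if (n+1) % 2 = 1 then (dpair n).1 ^ 2 else (dpair n).1 ^ 2 + (dpair n).2 ^ 2) := rfl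

lemma dpair_pos (n : ℕ) : 0 < (dpair n).1 ∧ 0 < (dpair n).2 := by
  induction n with
  | zero => exact ⟨one_pos, one_pos⟩
  | succ n ih =>
    obtain ⟨h1, h2⟩ := ih
    rw [dpair_succ]
    refine ⟨by positivity, ?_⟩
    simp only
    split <;> positivity

/-- log₂ of the odd-parity degeneracy -/
noncomputable def x (n : ℕ) : ℝ := Real.logb 2 ((dpair n).1 : ℝ)

/-- log₂ of the even-parity degeneracy -/
noncomputable def y (n : ℕ) : ℝ := Real.logb 2 ((dpair n).2 : ℝ)

lemma a_cast_pos (n : ℕ) : (0:ℝ) < ((dpair n).1 : ℝ) := by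
  exact_mod_cast (dpair_pos n).1

lemma b_cast_pos (n : ℕ) : (0:ℝ) < ((dpair n).2 : ℝ) := by
  exact_mod_cast (dpair_pos n).2

lemma x_nonneg (n : ℕ) : 0 ≤ x n :=
  Real.logb_nonneg one_lt_two (by exact_mod_cast (dpair_pos n).1)

lemma x_succ (n : ℕ) : x (n+1) = 1 + x n + y n := by
  have h1 := a_cast_pos n
  have h2 := b_cast_pos n
  unfold x y
  rw [dpair_succ]
  push_cast
  rw [Real.logb_mul (by positivity) (ne_of_gt h2),
    Real.logb_mul (by norm_num) (ne_of_gt h1), Real.logb_self_eq_one (by norm_num : (1:ℝ) < 2)]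

lemma y_succ_odd (n : ℕ) (h : (n+1) % 2 = 1) : y (n+1) = 2 * x n := by
  unfold x y
  rw [dpair_succ]
  simp only [if_pos h]
  push_cast
  rw [Real.logb_pow]
  norm_num

lemma logb_nat_mono {m k : ℕ} (hm : 0 < m) (h : m ≤ k) :
    Real.logb 2 (m : ℝ) ≤ Real.logb 2 (k : ℝ) :=
  Real.logb_le_logb_of_le one_lt_two (by exact_mod_cast hm) (by exact_mod_cast h)

/-- bounds for log₂(p² + q²) when q ≤ p -/
lemma even_bound {p q : ℕ} (hp : 0 < p) (hq : q ≤ p) :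
    2 * Real.logb 2 (p : ℝ) ≤ Real.logb 2 ((p^2 + q^2 : ℕ) : ℝ) ∧
    Real.logb 2 ((p^2 + q^2 : ℕ) : ℝ) ≤ 1 + 2 * Real.logb 2 (p : ℝ) := by
  have hp2 : 0 < p^2 := by positivity
  constructor
  · have h := logb_nat_mono hp2 (Nat.le_add_right (p^2) (q^2))
    calc 2 * Real.logb 2 (p : ℝ) = Real.logb 2 ((p^2 : ℕ) : ℝ) := by
          push_cast; rw [Real.logb_pow]; norm_num
      _ ≤ _ := h
  · have h : p^2 + q^2 ≤ 2 * p^2 := by nlinarith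
    have h' := logb_nat_mono (by positivity) h
    calc Real.logb 2 ((p^2 + q^2 : ℕ) : ℝ) ≤ Real.logb 2 ((2 * p^2 : ℕ) : ℝ) := h'
      _ = 1 + 2 * Real.logb 2 (p : ℝ) := by
          push_cast
          rw [Real.logb_mul (by norm_num) (by positivity),
            Real.logb_self_eq_one (by norm_num : (1:ℝ) < 2), Real.logb_pow]
          norm_num

lemma abs_e (n : ℕ) : |y n - x n| ≤ (n : ℝ) := by
  induction n with
  | zero =>
    have : y 0 = 0 := by unfold y; norm_num [show dpair 0 = (1,1) from rfl]
    have hx : x 0 = 0 := by unfold x; norm_num [show dpair 0 = (1,1) from rfl]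
    simp [this, hx]
  | succ n ih =>
    rw [x_succ]
    by_cases hpar : (n+1) % 2 = 1
    · rw [y_succ_odd n hpar]
      have : 2 * x n - (1 + x n + y n) = (x n - y n) - 1 := by ring
      rw [this]
      calc |(x n - y n) - 1| ≤ |x n - y n| + |(1:ℝ)| := abs_sub _ _
        _ = |y n - x n| + 1 := by rw [abs_sub_comm]; norm_num
        _ ≤ (n : ℝ) + 1 := by linarith
        _ = ((n+1 : ℕ) : ℝ) := by push_cast; ring
    · have hy : y (n+1) = Real.logb 2 (((dpair n).1^2 + (dpair n).2^2 : ℕ) : ℝ) := by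
        unfold y; rw [dpair_succ]; simp only [if_neg hpar]
      have hxd : Real.logb 2 ((dpair n).1 : ℝ) = x n := rfl
      have hyd : Real.logb 2 ((dpair n).2 : ℝ) = y n := rfl
      have hn0 : (0:ℝ) ≤ (n:ℝ) := Nat.cast_nonneg n
      rcases le_total ((dpair n).2) ((dpair n).1) with hab | hab
      · obtain ⟨hl, hu⟩ := even_bound (dpair_pos n).1 hab
        rw [hxd] at hl hu
        have hyx : y n ≤ x n := by rw [← hxd, ← hyd]; exact logb_nat_mono (dpair_pos n).2 hab
        have he : -(n:ℝ) ≤ y n - x n := (abs_le.mp ih).1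
        rw [hy, abs_le]
        push_cast at hl hu ⊢
        constructor
        · linarith
        · linarith
      · obtain ⟨hl, hu⟩ := even_bound (dpair_pos n).2 hab
        rw [hyd] at hl hu
        have hsymm : ((dpair n).1^2 + (dpair n).2^2 : ℕ) = ((dpair n).2^2 + (dpair n).1^2 : ℕ) := by
          ring
        rw [hsymm] at hy
        have hyx : x n ≤ y n := by rw [← hxd, ← hyd]; exact logb_nat_mono (dpair_pos n).1 hab
        have he : y n - x n ≤ (n:ℝ) := (abs_le.mp ih).2
        rw [hy, abs_le]
        push_cast at hl hu ⊢
        constructor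
        · linarith
        · linarith

lemma lower (n : ℕ) : 2^(2^n) ≤ (dpair (n+1)).1 ∧ 2^(2^n) ≤ 2 * (dpair (n+1)).2 := by
  induction n with
  | zero => decide
  | succ n ih =>
    obtain ⟨h1, h2⟩ := ih
    have key : (2:ℕ)^(2^(n+1)) = 2^(2^n) * 2^(2^n) := by
      rw [← pow_add]
      congr 1
      rw [pow_succ]
      ring
    constructor
    · rw [dpair_succ]
      simp only
      calc (2:ℕ)^(2^(n+1)) = 2^(2^n) * 2^(2^n) := key
        _ ≤ (dpair (n+1)).1 * (2 * (dpair (n+1)).2) := Nat.mul_le_mul h1 h2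
        _ = 2 * (dpair (n+1)).1 * (dpair (n+1)).2 := by ring
    · rw [dpair_succ]
      simp only
      have hb : (2:ℕ)^(2^(n+1)) ≤ (dpair (n+1)).1 ^ 2 := by
        rw [key, ← pow_two]
        exact Nat.pow_le_pow_left h1 2
      split
      · omega
      · have : (dpair (n+1)).1 ^ 2 ≤ (dpair (n+1)).1 ^ 2 + (dpair (n+1)).2 ^ 2 :=
          Nat.le_add_right _ _
        omega

lemma x_lower (n : ℕ) : (2:ℝ)^n ≤ x (n+1) := by
  have h := (lower n).1
  have : Real.logb 2 (((2:ℕ)^(2^n) : ℕ) : ℝ) ≤ x (n+1) :=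
    logb_nat_mono (by positivity) h
  calc (2:ℝ)^n = Real.logb 2 (((2:ℕ)^(2^n) : ℕ) : ℝ) := by
        push_cast
        rw [Real.logb_pow, Real.logb_self_eq_one (by norm_num : (1:ℝ) < 2)]
        push_cast
        ring
    _ ≤ x (n+1) := this

/-- normalized log-degeneracy of the odd sector -/
noncomputable def u (n : ℕ) : ℝ := x n / 2^n

/-- increments -/
noncomputable def g (n : ℕ) : ℝ := u (n+1) - u n

lemma g_eq (n : ℕ) : g n = (1 + (y n - x n)) / 2^(n+1) := by
  unfold g u
  rw [x_succ]
  have h1 : ((2:ℝ)^n) ≠ 0 := by positivity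
  have h2 : ((2:ℝ)^(n+1)) ≠ 0 := by positivity
  field_simp
  ring

lemma g_bound (n : ℕ) : ‖g n‖ ≤ ((n:ℝ)+1) * (1/2)^n := by
  have h1 : |1 + (y n - x n)| ≤ (n:ℝ) + 1 := by
    calc |1 + (y n - x n)| ≤ |(1:ℝ)| + |y n - x n| := abs_add_le _ _
      _ ≤ 1 + (n:ℝ) := by have := abs_e n; simp only [abs_one]; linarith
      _ = (n:ℝ) + 1 := by ring
  have h2 : (0:ℝ) < 2^(n+1) := by positivity
  rw [g_eq, Real.norm_eq_abs, abs_div, abs_of_pos h2]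
  calc |1 + (y n - x n)| / 2^(n+1) ≤ ((n:ℝ)+1) / 2^(n+1) := by gcongr
      _ ≤ ((n:ℝ)+1) / 2^n := by
        gcongr
        · norm_num
        · exact Nat.le_succ n
      _ = ((n:ℝ)+1) * (1/2)^n := by
        rw [div_pow, one_pow]; ring

lemma bound_summable : Summable (fun n : ℕ => ((n:ℝ)+1) * (1/2)^n) := by
  have h1 : Summable (fun n : ℕ => (n:ℝ) * (1/2)^n) := by
    have := summable_pow_mul_geometric_of_norm_lt_one (R := ℝ) 1 (r := (1/2:ℝ))
      (by
        rw [Real.norm_eq_abs, abs_of_pos] <;> norm_num)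
    simpa [pow_one] using this
  have h2 : Summable (fun n : ℕ => (1/2:ℝ)^n) :=
    summable_geometric_of_lt_one (by norm_num) (by norm_num)
  have h3 := h1.add h2
  refine h3.congr fun n => ?_
  ring

lemma g_summable : Summable g :=
  Summable.of_norm_bounded bound_summable g_bound

lemma u_eq_sum (n : ℕ) : u n = ∑ i ∈ Finset.range n, g i := by
  induction n with
  | zero =>
    have : x 0 = 0 := by unfold x; norm_num [show dpair 0 = (1,1) from rfl]
    simp [u, this]
  | succ n ih =>
    rw [Finset.sum_range_succ, ← ih]
    unfold g
    ring

lemma u_tendsto : Filter.Tendsto u Filter.atTop (nhds (∑' i, g i)) := by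
  have h := g_summable.hasSum.tendsto_sum_nat
  exact h.congr fun n => (u_eq_sum n).symm

lemma L_pos : (1/2 : ℝ) ≤ ∑' i, g i := by
  apply ge_of_tendsto u_tendsto
  rw [Filter.eventually_atTop]
  refine ⟨1, fun n hn => ?_⟩
  obtain ⟨m, rfl⟩ := Nat.exists_eq_add_of_le hn
  have hx := x_lower m
  unfold u
  rw [le_div_iff₀ (by positivity)]
  have h2 : (2:ℝ)^(1+m) = 2 * 2^m := by
    rw [pow_add]; ring
  have hx' : (2:ℝ)^m ≤ x (1+m) := by
    rwa [add_comm 1 m]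
  calc (1/2 : ℝ) * 2^(1+m) = 2^m := by rw [h2]; ring
    _ ≤ x (1+m) := hx'

lemma dseq_lower (n : ℕ) : (dpair n).1 ≤ dseq n := by
  unfold dseq
  split
  · exact Nat.le_add_right _ _
  · exact le_rfl

lemma dseq_pos (n : ℕ) : 0 < dseq n := lt_of_lt_of_le (dpair_pos n).1 (dseq_lower n)

lemma v_bounds (n : ℕ) :
    u n ≤ Real.logb 2 ((dseq n : ℕ) : ℝ) / 2^n ∧
    Real.logb 2 ((dseq n : ℕ) : ℝ) / 2^n ≤ u n + ((n:ℝ)+1) * (1/2)^n := by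
  have hpow : (0:ℝ) < 2^n := by positivity
  have hlow : x n ≤ Real.logb 2 ((dseq n : ℕ) : ℝ) :=
    logb_nat_mono (dpair_pos n).1 (dseq_lower n)
  have hup : Real.logb 2 ((dseq n : ℕ) : ℝ) ≤ x n + ((n:ℝ) + 1) := by
    rcases le_total ((dpair n).2) ((dpair n).1) with hab | hab
    · have h1 : dseq n ≤ 2 * (dpair n).1 := by
        unfold dseq; split <;> omega
      calc Real.logb 2 ((dseq n : ℕ) : ℝ) ≤ Real.logb 2 ((2 * (dpair n).1 : ℕ) : ℝ) :=
            logb_nat_mono (dseq_pos n) h1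
        _ = 1 + x n := by
            unfold x; push_cast
            rw [Real.logb_mul (by norm_num) (ne_of_gt (a_cast_pos n)),
              Real.logb_self_eq_one (by norm_num : (1:ℝ) < 2)]
        _ ≤ x n + ((n:ℝ) + 1) := by
            have : (0:ℝ) ≤ n := Nat.cast_nonneg n
            linarith
    · have h1 : dseq n ≤ 2 * (dpair n).2 := by
        unfold dseq; split <;> omega
      have he : y n - x n ≤ (n:ℝ) := by
        have := abs_le.mp (abs_e n); exact this.2
      calc Real.logb 2 ((dseq n : ℕ) : ℝ) ≤ Real.logb 2 ((2 * (dpair n).2 : ℕ) : ℝ) :=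
            logb_nat_mono (dseq_pos n) h1
        _ = 1 + y n := by
            unfold y; push_cast
            rw [Real.logb_mul (by norm_num) (ne_of_gt (b_cast_pos n)),
              Real.logb_self_eq_one (by norm_num : (1:ℝ) < 2)]
        _ ≤ x n + ((n:ℝ) + 1) := by linarith
  constructor
  · unfold u
    gcongr
  · have key : ((n:ℝ)+1) * (1/2)^n = ((n:ℝ)+1)/2^n := by
      rw [div_pow, one_pow]; ring
    rw [key]
    have : Real.logb 2 ((dseq n : ℕ) : ℝ) / 2^n ≤ (x n + ((n:ℝ)+1)) / 2^n := by
      gcongr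
    calc Real.logb 2 ((dseq n : ℕ) : ℝ) / 2^n ≤ (x n + ((n:ℝ)+1)) / 2^n := this
      _ = u n + ((n:ℝ)+1)/2^n := by unfold u; rw [add_div]

end DegAux

/-- d_1 = 3, d_2 = 4, d_3 = 56, and (log₂ d_n)/2^n converges to a finite
positive limit (extensive ground-state degeneracy). -/
theorem degeneracy_recursion_extensive :
    dseq 1 = 3 ∧ dseq 2 = 4 ∧ dseq 3 = 56 ∧
    ∃ L : ℝ, 0 < L ∧
      Filter.Tendsto (fun n : ℕ => Real.logb 2 (dseq n) / 2^n) Filter.atTop (nhds L) := by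
  refine ⟨by decide, by decide, by decide, ∑' i, DegAux.g i, ?_, ?_⟩
  · linarith [DegAux.L_pos]
  · have hupper : Filter.Tendsto (fun n : ℕ => DegAux.u n + ((n:ℝ)+1) * (1/2)^n)
        Filter.atTop (nhds ((∑' i, DegAux.g i) + 0)) :=
      DegAux.u_tendsto.add DegAux.bound_summable.tendsto_atTop_zero
    rw [add_zero] at hupper
    exact tendsto_of_tendsto_of_tendsto_of_le_of_le DegAux.u_tendsto hupper
      (fun n => (DegAux.v_bounds n).1) (fun n => (DegAux.v_bounds n).2)
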